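/- Comparison of Carleson norms of nested cubes: let p(·) be an exponent with the maximal operator bounded on L^{p(·)/p⁻} (e.g. p(·) ∈ LH with 0 < p⁻ ≤ p⁺ < ∞), and let P ⊂ P' be cubes. Then ( ‖χ_{P'}‖²_{L^{p(·)}} / ‖χ_P‖²_{L^{p(·)}} ) · ( |P| / |P'| ) ≤ C ( |P'| / |P| )^{2/p⁻ − 1}. -/

import Mathlib

open MeasureTheory Set
open scoped ENNReal NNReal

/-- The variable-exponent Lebesgue "norm" for an `ℝ≥0∞`-valued density. -/
noncomputable def vnorm {n : ℕ} (p : EuclideanSpace ℝ (Fin n) → ℝ)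
    (g : EuclideanSpace ℝ (Fin n) → ℝ≥0∞) : ℝ≥0∞ :=
  sInf {l : ℝ≥0∞ | 0 < l ∧ (∫⁻ x, (g x / l) ^ (p x)) ≤ 1}

/-- The variable-exponent Lebesgue norm of a complex-valued function. -/
noncomputable def vnormC {n : ℕ} (p : EuclideanSpace ℝ (Fin n) → ℝ)
    (f : EuclideanSpace ℝ (Fin n) → ℂ) : ℝ≥0∞ :=
  vnorm p fun x => (‖f x‖₊ : ℝ≥0∞)

/-- The (uncentered) Hardy–Littlewood maximal operator. -/
noncomputable def HLM {n : ℕ} (f : EuclideanSpace ℝ (Fin n) → ℂ)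
    (x : EuclideanSpace ℝ (Fin n)) : ℝ≥0∞ :=
  ⨆ (z : EuclideanSpace ℝ (Fin n)) (r : ℝ) (_ : 0 < r) (_ : x ∈ Metric.ball z r),
    (volume (Metric.ball z r))⁻¹ * ∫⁻ y in Metric.ball z r, (‖f y‖₊ : ℝ≥0∞)
/-- The axis-parallel cube with lower-left corner `a` and side length `s`. -/
def cube {n : ℕ} (a : EuclideanSpace ℝ (Fin n)) (s : ℝ) : Set (EuclideanSpace ℝ (Fin n)) :=
  {x | ∀ i, a i ≤ x i ∧ x i < a i + s}

/-! ### Auxiliary lemmas -/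

lemma cube_eq_preimage {n : ℕ} (a : EuclideanSpace ℝ (Fin n)) (s : ℝ) :
    cube a s = (MeasurableEquiv.toLp 2 (Fin n → ℝ)).symm ⁻¹'
        (Set.univ.pi fun i => Set.Ico (a i) (a i + s)) := by
  ext x
  simp [cube, Set.mem_pi, MeasurableEquiv.coe_toLp_symm, Set.mem_Ico]

lemma volume_cube {n : ℕ} (a : EuclideanSpace ℝ (Fin n)) (s : ℝ) :
    volume (cube a s) = ENNReal.ofReal s ^ n := by
  rw [cube_eq_preimage,
    (EuclideanSpace.volume_preserving_symm_measurableEquiv_toLp (Fin n)).measure_preimage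
      ((MeasurableSet.univ_pi fun i => measurableSet_Ico).nullMeasurableSet),
    volume_pi_pi]
  simp [Real.volume_Ico]

lemma measurableSet_cube {n : ℕ} (a : EuclideanSpace ℝ (Fin n)) (s : ℝ) :
    MeasurableSet (cube a s) := by
  rw [cube_eq_preimage]
  exact (MeasurableEquiv.toLp 2 (Fin n → ℝ)).symm.measurable
    (MeasurableSet.univ_pi fun i => measurableSet_Ico)

lemma nnnorm_indicator_one {n : ℕ} (S : Set (EuclideanSpace ℝ (Fin n))) :
    (fun x => ((‖(S.indicator fun _ => (1:ℂ)) x‖₊ : ℝ≥0) : ℝ≥0∞)) =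
      S.indicator fun _ => 1 := by
  ext x
  by_cases h : x ∈ S <;> simp [Set.indicator_apply, h]

lemma vnorm_mono {n : ℕ} {p : EuclideanSpace ℝ (Fin n) → ℝ} (hp : ∀ x, 0 ≤ p x)
    {g h : EuclideanSpace ℝ (Fin n) → ℝ≥0∞} (hgh : ∀ x, g x ≤ h x) :
    vnorm p g ≤ vnorm p h := by
  refine sInf_le_sInf fun l hl => ⟨hl.1, le_trans (lintegral_mono fun x => ?_) hl.2⟩
  exact ENNReal.rpow_le_rpow (ENNReal.div_le_div_right (hgh x) l) (hp x)

/-- Multiplication by a fixed `c ∈ (0,∞)` as an order isomorphism of `ℝ≥0∞`. -/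
noncomputable def mulIso (c : ℝ≥0∞) (hc0 : c ≠ 0) (hct : c ≠ ⊤) : ℝ≥0∞ ≃o ℝ≥0∞ where
  toFun := fun x => c * x
  invFun := fun x => c⁻¹ * x
  left_inv := fun x => by simp only [← mul_assoc, ENNReal.inv_mul_cancel hc0 hct, one_mul]
  right_inv := fun x => by simp only [← mul_assoc, ENNReal.mul_inv_cancel hc0 hct, one_mul]
  map_rel_iff' := by
    intro a b
    exact ENNReal.mul_le_mul_iff_right hc0 hct

lemma vnorm_const_mul_le {n : ℕ} {p : EuclideanSpace ℝ (Fin n) → ℝ}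
    (g : EuclideanSpace ℝ (Fin n) → ℝ≥0∞) {c : ℝ≥0∞} (hc0 : c ≠ 0) (hct : c ≠ ⊤) :
    vnorm p (fun x => c * g x) ≤ c * vnorm p g := by
  have hco : c * vnorm p g =
      sInf ((fun l => c * l) '' {l : ℝ≥0∞ | 0 < l ∧ (∫⁻ x, (g x / l) ^ (p x)) ≤ 1}) := by
    have h := (mulIso c hc0 hct).map_sInf
      {l : ℝ≥0∞ | 0 < l ∧ (∫⁻ x, (g x / l) ^ (p x)) ≤ 1}
    exact h.trans sInf_image.symm
  rw [hco]
  refine sInf_le_sInf ?_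
  rintro - ⟨l, ⟨hl0, hl⟩, rfl⟩
  refine ⟨ENNReal.mul_pos hc0 hl0.ne', ?_⟩
  refine le_trans (le_of_eq (lintegral_congr fun x => ?_)) hl
  rw [ENNReal.mul_div_mul_left _ _ hc0 hct]

lemma indicator_div_rpow_eq {n : ℕ} {p : EuclideanSpace ℝ (Fin n) → ℝ} {pm : ℝ}
    (hpm : 0 < pm) (hp : ∀ x, pm ≤ p x) (S : Set (EuclideanSpace ℝ (Fin n)))
    (l : ℝ≥0∞) (x : EuclideanSpace ℝ (Fin n)) :
    (S.indicator (fun _ => (1:ℝ≥0∞)) x / l ^ pm) ^ (p x / pm) =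
      (S.indicator (fun _ => (1:ℝ≥0∞)) x / l) ^ (p x) := by
  have hpx : 0 < p x := lt_of_lt_of_le hpm (hp x)
  by_cases h : x ∈ S
  · simp only [Set.indicator_of_mem h]
    rw [ENNReal.div_eq_inv_mul, ENNReal.div_eq_inv_mul, mul_one, mul_one,
      ← ENNReal.rpow_neg_one l, ← ENNReal.rpow_neg_one (l ^ pm),
      ← ENNReal.rpow_mul, ← ENNReal.rpow_mul, ← ENNReal.rpow_mul]
    congr 1
    field_simp
  · simp only [Set.indicator_of_notMem h, ENNReal.zero_div,
      ENNReal.zero_rpow_of_pos hpx, ENNReal.zero_rpow_of_pos (div_pos hpx hpm)]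

lemma vnorm_indicator_scaling {n : ℕ} {p : EuclideanSpace ℝ (Fin n) → ℝ} {pm : ℝ}
    (hpm : 0 < pm) (hp : ∀ x, pm ≤ p x) (S : Set (EuclideanSpace ℝ (Fin n))) :
    vnorm (fun x => p x / pm) (S.indicator fun _ => 1) =
      (vnorm p (S.indicator fun _ => 1)) ^ pm := by
  have key : ∀ l : ℝ≥0∞,
      (l ^ pm ∈ {m : ℝ≥0∞ | 0 < m ∧
          (∫⁻ x, (S.indicator (fun _ => (1:ℝ≥0∞)) x / m) ^ (p x / pm)) ≤ 1}) ↔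
      (l ∈ {m : ℝ≥0∞ | 0 < m ∧
          (∫⁻ x, (S.indicator (fun _ => (1:ℝ≥0∞)) x / m) ^ (p x)) ≤ 1}) := by
    intro l
    have h1 : (0 : ℝ≥0∞) < l ^ pm ↔ 0 < l := by
      simp [pos_iff_ne_zero, ENNReal.rpow_eq_zero_iff, hpm, hpm.not_gt, hpm.le]
    have h2 : (∫⁻ x, (S.indicator (fun _ => (1:ℝ≥0∞)) x / l ^ pm) ^ (p x / pm)) =
        ∫⁻ x, (S.indicator (fun _ => (1:ℝ≥0∞)) x / l) ^ (p x) :=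
      lintegral_congr (indicator_div_rpow_eq hpm hp S l)
    rw [Set.mem_setOf_eq, Set.mem_setOf_eq, h1, h2]
  have himg : {m : ℝ≥0∞ | 0 < m ∧
      (∫⁻ x, (S.indicator (fun _ => (1:ℝ≥0∞)) x / m) ^ (p x / pm)) ≤ 1} =
      (fun l : ℝ≥0∞ => l ^ pm) ''
        {m : ℝ≥0∞ | 0 < m ∧
          (∫⁻ x, (S.indicator (fun _ => (1:ℝ≥0∞)) x / m) ^ (p x)) ≤ 1} := by
    ext m'
    constructor
    · intro hm'
      obtain ⟨l, rfl⟩ := (ENNReal.orderIsoRpow pm hpm).surjective m'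
      exact ⟨l, (key l).mp hm', rfl⟩
    · rintro ⟨l, hl, rfl⟩
      exact (key l).mpr hl
  have hmap := (ENNReal.orderIsoRpow pm hpm).map_sInf
    {m : ℝ≥0∞ | 0 < m ∧ (∫⁻ x, (S.indicator (fun _ => (1:ℝ≥0∞)) x / m) ^ (p x)) ≤ 1}
  rw [show ⇑(ENNReal.orderIsoRpow pm hpm) = fun l : ℝ≥0∞ => l ^ pm from
    funext fun l => ENNReal.orderIsoRpow_apply pm hpm l] at hmap
  rw [vnorm, vnorm, himg]
  exact (hmap.trans sInf_image.symm).symm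

lemma cube_subset_ball {n : ℕ} (a : EuclideanSpace ℝ (Fin n)) {s : ℝ} (hs : 0 < s) :
    cube a s ⊆ Metric.ball a (s * (n + 1)) := by
  intro x hx
  rw [Metric.mem_ball, EuclideanSpace.dist_eq]
  have hterm : ∀ i : Fin n, dist (x i) (a i) ^ 2 ≤ s ^ 2 := by
    intro i
    have h1 := (hx i).1
    have h2 := (hx i).2
    rw [Real.dist_eq, abs_of_nonneg (by linarith)]
    nlinarith
  have hsum : (∑ i : Fin n, dist (x i) (a i) ^ 2) ≤ n * s ^ 2 := by
    calc (∑ i : Fin n, dist (x i) (a i) ^ 2) ≤ ∑ _i : Fin n, s ^ 2 :=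
          Finset.sum_le_sum fun i _ => hterm i
      _ = n * s ^ 2 := by simp [mul_comm]
  calc Real.sqrt (∑ i : Fin n, dist (x i) (a i) ^ 2) ≤ Real.sqrt ((n * s) ^ 2) := by
        apply Real.sqrt_le_sqrt
        have hnn : (n : ℝ) ≤ (n : ℝ) ^ 2 := by exact_mod_cast Nat.le_self_pow two_ne_zero n
        nlinarith [sq_nonneg s]
    _ = n * s := Real.sqrt_sq (by positivity)
    _ < s * (n + 1) := by nlinarith

lemma indicator_le_mul_HLM {n : ℕ} {a a' : EuclideanSpace ℝ (Fin n)} {s s' : ℝ}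
    (hs' : 0 < s') (hP : MeasurableSet (cube a s))
    (hsub : cube a s ⊆ cube a' s')
    (hV0 : volume (cube a s) ≠ 0) (hVt : volume (cube a s) ≠ ⊤)
    (x : EuclideanSpace ℝ (Fin n)) :
    (cube a' s').indicator (fun _ => (1:ℝ≥0∞)) x ≤
      (volume (Metric.ball a' (s' * (n + 1))) * (volume (cube a s))⁻¹) *
        HLM ((cube a s).indicator fun _ => (1:ℂ)) x := by
  by_cases hx : x ∈ cube a' s'
  case neg => simp [Set.indicator_of_notMem hx]
  rw [Set.indicator_of_mem hx]
  set B := Metric.ball a' (s' * (n + 1)) with hB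
  have hr : (0:ℝ) < s' * (n + 1) := by positivity
  have hBx : x ∈ B := cube_subset_ball a' hs' hx
  have hPB : cube a s ⊆ B := (hsub.trans (cube_subset_ball a' hs'))
  have hB0 : volume B ≠ 0 := (Metric.measure_ball_pos volume a' hr).ne'
  have hBt : volume B ≠ ⊤ := measure_ball_lt_top.ne
  have hint : (∫⁻ y in B, (‖((cube a s).indicator fun _ => (1:ℂ)) y‖₊ : ℝ≥0∞))
      = volume (cube a s) := by
    have h1 : (∫⁻ y in B, (‖((cube a s).indicator fun _ => (1:ℂ)) y‖₊ : ℝ≥0∞))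
        = ∫⁻ y in B, (cube a s).indicator (fun _ => (1:ℝ≥0∞)) y :=
      lintegral_congr fun y => by by_cases h : y ∈ cube a s <;> simp [h]
    rw [h1, lintegral_indicator hP, setLIntegral_one, Measure.restrict_apply hP,
      Set.inter_eq_self_of_subset_left hPB]
  have hle : (volume B)⁻¹ * volume (cube a s) ≤
      HLM ((cube a s).indicator fun _ => (1:ℂ)) x := by
    rw [← hint]
    exact le_iSup_of_le a' (le_iSup_of_le (s' * (n + 1))
      (le_iSup_of_le hr (le_iSup_of_le hBx le_rfl)))
  calc (1:ℝ≥0∞) = (volume B * (volume (cube a s))⁻¹) *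
        ((volume B)⁻¹ * volume (cube a s)) := by
        rw [mul_mul_mul_comm, ENNReal.mul_inv_cancel hB0 hBt,
          ENNReal.inv_mul_cancel hV0 hVt, one_mul]
    _ ≤ _ := mul_le_mul_right hle _

/-- comparison of Carleson norm factors for nested cubes. Assuming the
maximal operator is bounded on `L^{p(·)/p⁻}`, for cubes `P ⊆ P'` one has
`(‖χ_{P'}‖² / ‖χ_P‖²) (|P| / |P'|) ≤ C (|P'|/|P|)^{2/p⁻ − 1}`. -/
theorem nested_cube_norm_comparison {n : ℕ} (hn : 1 ≤ n)
    (p : EuclideanSpace ℝ (Fin n) → ℝ) (pm pM : ℝ) (hpm : 0 < pm)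
    (hbd : ∀ x, pm ≤ p x ∧ p x ≤ pM)
    (hmax : ∃ A : ℝ≥0∞, A < ⊤ ∧ ∀ f : EuclideanSpace ℝ (Fin n) → ℂ, Measurable f →
      vnorm (fun x => p x / pm) (HLM f) ≤ A * vnormC (fun x => p x / pm) f) :
    ∃ C : ℝ≥0∞, C < ⊤ ∧
      ∀ (a a' : EuclideanSpace ℝ (Fin n)) (s s' : ℝ), 0 < s → 0 < s' →
        cube a s ⊆ cube a' s' →
        (vnormC p ((cube a' s').indicator fun _ => (1 : ℂ))) ^ 2 /
            (vnormC p ((cube a s).indicator fun _ => (1 : ℂ))) ^ 2 *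
            (volume (cube a s) / volume (cube a' s')) ≤
          C * (volume (cube a' s') / volume (cube a s)) ^ (2 / pm - 1) := by
  obtain ⟨A, hAt, hA⟩ := hmax
  set κ : ℝ≥0∞ := ENNReal.ofReal (Real.sqrt Real.pi ^ n / Real.Gamma (n / 2 + 1)) with hκ
  set Cg : ℝ≥0∞ := ENNReal.ofReal ((n : ℝ) + 1) ^ n * κ with hCg
  have hCgt : Cg ≠ ⊤ := ENNReal.mul_ne_top (by
    exact ENNReal.pow_ne_top ENNReal.ofReal_ne_top) ENNReal.ofReal_ne_top
  refine ⟨(Cg * A) ^ (2 / pm), ENNReal.rpow_lt_top_of_nonneg (by positivity)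
    (ENNReal.mul_ne_top hCgt hAt.ne), ?_⟩
  intro a a' s s' hs hs' hsub
  have hp0 : ∀ x, pm ≤ p x := fun x => (hbd x).1
  have hq0 : ∀ x, 0 ≤ p x / pm := fun x => div_nonneg (le_trans hpm.le (hp0 x)) hpm.le
  have hVP : volume (cube a s) = ENNReal.ofReal s ^ n := volume_cube a s
  have hVP' : volume (cube a' s') = ENNReal.ofReal s' ^ n := volume_cube a' s'
  have hV0 : volume (cube a s) ≠ 0 := by
    rw [hVP]; exact pow_ne_zero _ (ENNReal.ofReal_pos.mpr hs).ne'
  have hVt : volume (cube a s) ≠ ⊤ := by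
    rw [hVP]; exact ENNReal.pow_ne_top ENNReal.ofReal_ne_top
  have hV'0 : volume (cube a' s') ≠ 0 := by
    rw [hVP']; exact pow_ne_zero _ (ENNReal.ofReal_pos.mpr hs').ne'
  have hV't : volume (cube a' s') ≠ ⊤ := by
    rw [hVP']; exact ENNReal.pow_ne_top ENNReal.ofReal_ne_top
  set B := Metric.ball a' (s' * (n + 1)) with hBdef
  have hr : (0:ℝ) < s' * (n + 1) := by positivity
  have hB0 : volume B ≠ 0 := (Metric.measure_ball_pos volume a' hr).ne'
  have hBt : volume B ≠ ⊤ := measure_ball_lt_top.ne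
  haveI : Nonempty (Fin n) := ⟨⟨0, by omega⟩⟩
  -- volume of the ball in terms of the volume of the big cube
  have hvolB : volume B = volume (cube a' s') * Cg := by
    rw [hBdef, EuclideanSpace.volume_ball, hVP', hCg, hκ]
    simp only [Fintype.card_fin]
    rw [ENNReal.ofReal_mul hs'.le, mul_pow, mul_assoc]
  set c : ℝ≥0∞ := volume B * (volume (cube a s))⁻¹ with hc
  have hc0 : c ≠ 0 := mul_ne_zero hB0 (ENNReal.inv_ne_zero.mpr hVt)
  have hct : c ≠ ⊤ := ENNReal.mul_ne_top hBt (ENNReal.inv_ne_top.mpr hV0)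
  -- the maximal-function estimate at the level of the exponent p/pm
  have hfmeas : Measurable ((cube a s).indicator fun _ => (1:ℂ)) :=
    measurable_const.indicator (measurableSet_cube a s)
  have hvnormCq : vnormC (fun x => p x / pm) ((cube a s).indicator fun _ => (1:ℂ)) =
      vnorm (fun x => p x / pm) ((cube a s).indicator fun _ => 1) := by
    rw [vnormC, nnnorm_indicator_one]
  have key_q : vnorm (fun x => p x / pm) ((cube a' s').indicator fun _ => 1) ≤
      (c * A) * vnorm (fun x => p x / pm) ((cube a s).indicator fun _ => 1) := by
    calc vnorm (fun x => p x / pm) ((cube a' s').indicator fun _ => 1)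
        ≤ vnorm (fun x => p x / pm)
            (fun x => c * HLM ((cube a s).indicator fun _ => (1:ℂ)) x) :=
          vnorm_mono hq0
            (indicator_le_mul_HLM hs' (measurableSet_cube a s) hsub hV0 hVt)
      _ ≤ c * vnorm (fun x => p x / pm) (HLM ((cube a s).indicator fun _ => (1:ℂ))) :=
          vnorm_const_mul_le _ hc0 hct
      _ ≤ c * (A * vnormC (fun x => p x / pm) ((cube a s).indicator fun _ => (1:ℂ))) :=
          mul_le_mul_right (hA _ hfmeas) c
      _ = (c * A) * vnorm (fun x => p x / pm) ((cube a s).indicator fun _ => 1) := by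
          rw [hvnormCq, hc]
          ring
  -- transfer to the exponent p via the scaling identity
  set b : ℝ≥0∞ := vnorm p ((cube a s).indicator fun _ => 1) with hb
  set a₀ : ℝ≥0∞ := vnorm p ((cube a' s').indicator fun _ => 1) with ha₀
  have hscal : a₀ ^ pm ≤ (c * A) * b ^ pm := by
    rw [ha₀, hb, ← vnorm_indicator_scaling hpm hp0, ← vnorm_indicator_scaling hpm hp0]
    exact key_q
  have hKb : a₀ ≤ (c * A) ^ (1 / pm) * b := by
    have h1 : a₀ = (a₀ ^ pm) ^ (1 / pm) := by
      rw [← ENNReal.rpow_mul, mul_one_div, div_self hpm.ne', ENNReal.rpow_one]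
    have h2 : (b ^ pm) ^ (1 / pm) = b := by
      rw [← ENNReal.rpow_mul, mul_one_div, div_self hpm.ne', ENNReal.rpow_one]
    calc a₀ = (a₀ ^ pm) ^ (1 / pm) := h1
      _ ≤ ((c * A) * b ^ pm) ^ (1 / pm) :=
          ENNReal.rpow_le_rpow hscal (by positivity)
      _ = (c * A) ^ (1 / pm) * b := by
          rw [ENNReal.mul_rpow_of_nonneg _ _ (by positivity : (0:ℝ) ≤ 1 / pm), h2]
  -- square and divide
  have hsq : a₀ ^ 2 ≤ (c * A) ^ (2 / pm) * b ^ 2 := by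
    have h3 : ((c * A) ^ (1 / pm)) ^ 2 = (c * A) ^ (2 / pm) := by
      rw [← ENNReal.rpow_natCast ((c * A) ^ (1 / pm)) 2, ← ENNReal.rpow_mul]
      congr 1
      push_cast
      ring
    calc a₀ ^ 2 ≤ ((c * A) ^ (1 / pm) * b) ^ 2 := by gcongr
      _ = (c * A) ^ (2 / pm) * b ^ 2 := by rw [mul_pow, h3]
  have hdiv : a₀ ^ 2 / b ^ 2 ≤ (c * A) ^ (2 / pm) :=
    ENNReal.div_le_of_le_mul hsq
  -- rewrite the goal
  have hCval : vnormC p ((cube a' s').indicator fun _ => (1 : ℂ)) = a₀ := by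
    rw [vnormC, nnnorm_indicator_one]
  have hCval' : vnormC p ((cube a s).indicator fun _ => (1 : ℂ)) = b := by
    rw [vnormC, nnnorm_indicator_one]
  rw [hCval, hCval']
  -- final computation with the volumes
  set V : ℝ≥0∞ := volume (cube a s)
  set V' : ℝ≥0∞ := volume (cube a' s')
  have hx0 : V' / V ≠ 0 := (ENNReal.div_pos hV'0 hVt).ne'
  have hxt : V' / V ≠ ⊤ := (ENNReal.div_lt_top hV't hV0).ne
  have hcA : c * A = (Cg * A) * (V' / V) := by
    rw [hc, hvolB, div_eq_mul_inv]
    ring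
  calc a₀ ^ 2 / b ^ 2 * (V / V')
      ≤ (c * A) ^ (2 / pm) * (V / V') := mul_le_mul_left hdiv _
    _ = (Cg * A) ^ (2 / pm) * ((V' / V) ^ (2 / pm) * (V / V')) := by
        rw [hcA, ENNReal.mul_rpow_of_nonneg _ _ (by positivity : (0:ℝ) ≤ 2 / pm), mul_assoc]
    _ = (Cg * A) ^ (2 / pm) * (V' / V) ^ (2 / pm - 1) := by
        congr 1
        have hinv : V / V' = (V' / V)⁻¹ :=
          (ENNReal.inv_div (Or.inl hVt) (Or.inl hV0)).symm
        rw [hinv, ← ENNReal.rpow_neg_one (V' / V),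
          ← ENNReal.rpow_add _ _ hx0 hxt]
        congr 1
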